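/- Let G_1 be a finite group, let E be a finite set of ordered pairs of distinct primes such that whenever G_1 contains a Schmidt (p,q)-subgroup one has (p, q) ∈ E, and let V be a finite set of primes containing every prime dividing the order of G_1 and every prime occurring in a pair of E. Then there exists a finite group G_2 containing a subgroup isomorphic to G_1 such that the set of primes dividing the order of G_2 is exactly V and, for distinct primes p and q, G_2 contains a Schmidt (p,q)-subgroup if and only if (p, q) ∈ E. -/

import Mathlib

/-- A Schmidt group: a finite non-nilpotent group all of whose proper subgroups are nilpotent. -/
def IsSchmidtGroup (G : Type*) [Group G] : Prop :=
  Finite G ∧ ¬ Group.IsNilpotent G ∧ ∀ H : Subgroup G, H ≠ ⊤ → Group.IsNilpotent H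

/-- A Schmidt `(p, q)`-group: a Schmidt group whose order is divisible by no primes other than
`p` and `q` and whose Sylow `p`-subgroup is normal. -/
def IsSchmidtPQGroup (p q : ℕ) (G : Type*) [Group G] : Prop :=
  IsSchmidtGroup G ∧ (∀ r : ℕ, r.Prime → r ∣ Nat.card G → r = p ∨ r = q) ∧
    ∀ P : Sylow p G, (P : Subgroup G).Normal

/-- `G` contains a Schmidt `(p, q)`-subgroup. -/
def HasSchmidtPQSubgroup (p q : ℕ) (G : Type*) [Group G] : Prop :=
  ∃ H : Subgroup G, IsSchmidtPQGroup p q H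


section Transfer

variable {G K : Type*} [Group G] [Group K]

lemma nilpotent_of_injective_to_nilpotent (f : G →* K) (hf : Function.Injective f)
    [Group.IsNilpotent K] : Group.IsNilpotent G :=
  nilpotent_of_mulEquiv (MonoidHom.ofInjective hf).symm

lemma nilpotent_of_comm_forall (h : ∀ a b : G, a * b = b * a) : Group.IsNilpotent G := by
  letI : CommGroup G := { mul_comm := h }
  infer_instance

/-- Non-nilpotent image of a Schmidt (p,q)-group is a Schmidt (p,q)-group. -/
lemma isSchmidtPQ_of_surjective {p q : ℕ} (hp : p.Prime) (f : G →* K)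
    (hf : Function.Surjective f) (hG : IsSchmidtPQGroup p q G)
    (hK : ¬ Group.IsNilpotent K) : IsSchmidtPQGroup p q K := by
  haveI : Fact p.Prime := ⟨hp⟩
  obtain ⟨⟨hfin, _hnn, hsub⟩, hdvd, hsyl⟩ := hG
  haveI : Finite G := hfin
  haveI : Finite K := Finite.of_surjective f hf
  refine ⟨⟨inferInstance, hK, ?_⟩, ?_, ?_⟩
  · intro H hH
    have hc : Subgroup.comap f H ≠ ⊤ := by
      intro h
      apply hH
      rw [← Subgroup.map_comap_eq_self_of_surjective hf H, h,
        ← MonoidHom.range_eq_map, MonoidHom.range_eq_top.2 hf]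
    haveI := hsub _ hc
    have hmap : Subgroup.map f (Subgroup.comap f H) = H :=
      Subgroup.map_comap_eq_self_of_surjective hf H
    have h1 : Group.IsNilpotent (Subgroup.map f (Subgroup.comap f H)) :=
      nilpotent_of_surjective _ (f.subgroupMap_surjective (Subgroup.comap f H))
    exact nilpotent_of_mulEquiv (MulEquiv.subgroupCongr hmap)
  · intro r hr hrd
    exact hdvd r hr (hrd.trans (Subgroup.card_dvd_of_surjective f hf))
  · intro P
    obtain ⟨P₀, rfl⟩ := Sylow.mapSurjective_surjective hf p P
    rw [Sylow.coe_mapSurjective]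
    exact (hsyl P₀).map f hf

lemma isSchmidtPQ_of_mulEquiv {p q : ℕ} (hp : p.Prime) (e : G ≃* K)
    (hG : IsSchmidtPQGroup p q G) : IsSchmidtPQGroup p q K := by
  refine isSchmidtPQ_of_surjective hp e.toMonoidHom e.surjective hG ?_
  intro h
  exact hG.1.2.1 (nilpotent_of_mulEquiv e.symm)

lemma hasSchmidtPQ_of_injective {p q : ℕ} (hp : p.Prime) (f : G →* K)
    (hf : Function.Injective f) (h : HasSchmidtPQSubgroup p q G) :
    HasSchmidtPQSubgroup p q K := by
  obtain ⟨H, hH⟩ := h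
  exact ⟨H.map f, isSchmidtPQ_of_mulEquiv hp (H.equivMapOfInjective f hf) hH⟩

lemma hasSchmidtPQ_of_subgroup {p q : ℕ} (hp : p.Prime) (H : Subgroup G)
    (h : HasSchmidtPQSubgroup p q H) : HasSchmidtPQSubgroup p q G :=
  hasSchmidtPQ_of_injective hp H.subtype Subtype.coe_injective h

lemma not_hasSchmidtPQ_of_nilpotent {p q : ℕ} (hG : Group.IsNilpotent G) :
    ¬ HasSchmidtPQSubgroup p q G := by
  rintro ⟨H, ⟨⟨_, hnn, _⟩, _, _⟩⟩
  exact hnn (Subgroup.isNilpotent H)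

lemma hasSchmidtPQ_self {p q : ℕ} (hp : p.Prime) (h : IsSchmidtPQGroup p q G) :
    HasSchmidtPQSubgroup p q G :=
  ⟨⊤, isSchmidtPQ_of_mulEquiv hp Subgroup.topEquiv.symm h⟩

/-- Schmidt subgroups of a binary product come from the factors. -/
lemma hasSchmidtPQ_prod {A B : Type*} [Group A] [Group B] {p q : ℕ} (hp : p.Prime)
    (h : HasSchmidtPQSubgroup p q (A × B)) :
    HasSchmidtPQSubgroup p q A ∨ HasSchmidtPQSubgroup p q B := by
  obtain ⟨H, hH⟩ := h
  by_cases h1 : Group.IsNilpotent (H.map (MonoidHom.fst A B))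
  · by_cases h2 : Group.IsNilpotent (H.map (MonoidHom.snd A B))
    · exfalso
      apply hH.1.2.1
      haveI := h1; haveI := h2
      set f1 := (MonoidHom.fst A B).subgroupMap H
      set f2 := (MonoidHom.snd A B).subgroupMap H
      have : Function.Injective (MonoidHom.prod f1 f2) := by
        intro x y hxy
        have e1 : f1 x = f1 y := congrArg Prod.fst hxy
        have e2 : f2 x = f2 y := congrArg Prod.snd hxy
        have v1 : (x : A × B).1 = (y : A × B).1 := congrArg Subtype.val e1
        have v2 : (x : A × B).2 = (y : A × B).2 := congrArg Subtype.val e2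
        exact Subtype.ext (Prod.ext v1 v2)
      exact nilpotent_of_injective_to_nilpotent _ this
    · right
      exact ⟨_, isSchmidtPQ_of_surjective hp _
        ((MonoidHom.snd A B).subgroupMap_surjective H) hH h2⟩
  · left
    exact ⟨_, isSchmidtPQ_of_surjective hp _
      ((MonoidHom.fst A B).subgroupMap_surjective H) hH h1⟩

end Transfer

section Unique
variable {G : Type*} [Group G]

/-- In a Schmidt (p,q)-group with p,q distinct primes, both p and q divide the order. -/
lemma isSchmidtPQ_dvd {p q : ℕ} (hp : p.Prime) (hq : q.Prime) (hpq : p ≠ q)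
    (h : IsSchmidtPQGroup p q G) : p ∣ Nat.card G ∧ q ∣ Nat.card G := by
  haveI : Finite G := h.1.1
  have hcard : Nat.card G ≠ 0 := Nat.card_pos.ne'
  have key : ∀ r : ℕ, r.Prime → (∀ {d : ℕ}, d.Prime → d ∣ Nat.card G → d = r) → False := by
    intro r hr hall
    haveI : Fact r.Prime := ⟨hr⟩
    have := Nat.eq_prime_pow_of_unique_prime_dvd hcard hall
    exact h.1.2.1 ((IsPGroup.of_card this).isNilpotent)
  constructor
  · by_contra hnd
    exact key q hq (fun {d} hd hdvd => ((h.2.1 d hd hdvd).resolve_left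
      (fun e => hnd (e ▸ hdvd))))
  · by_contra hnd
    exact key p hp (fun {d} hd hdvd => ((h.2.1 d hd hdvd).resolve_right
      (fun e => hnd (e ▸ hdvd))))

/-- A Schmidt group can be a Schmidt (p,q)-group for only one ordered pair (p,q). -/
lemma isSchmidtPQ_unique {p q p' q' : ℕ} (hp : p.Prime) (hq : q.Prime) (hpq : p ≠ q)
    (hp' : p'.Prime) (hq' : q'.Prime) (hpq' : p' ≠ q')
    (h : IsSchmidtPQGroup p q G) (h' : IsSchmidtPQGroup p' q' G) : p = p' ∧ q = q' := by
  haveI : Finite G := h.1.1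
  obtain ⟨hpd, hqd⟩ := isSchmidtPQ_dvd hp hq hpq h
  obtain ⟨hpd', hqd'⟩ := isSchmidtPQ_dvd hp' hq' hpq' h'
  have hpm : p = p' ∨ p = q' := h'.2.1 p hp hpd
  have hqm : q = p' ∨ q = q' := h'.2.1 q hq hqd
  -- show p ≠ q', else all Sylow subgroups are normal and G is nilpotent
  have hnp : p ≠ q' := by
    intro he
    apply h.1.2.1
    have h4 : ∀ (r : ℕ) (_ : Fact r.Prime) (P : Sylow r G), (P : Subgroup G).Normal := by
      intro r hr P
      rcases eq_or_ne r p' with rfl | hr1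
      · exact h'.2.2 P
      rcases eq_or_ne r q' with rfl | hr2
      · exact he ▸ h.2.2 (he ▸ P)
      · -- r does not divide the order, so P is trivial
        have hnd : ¬ r ∣ Nat.card G := fun hd => by
          rcases h'.2.1 r hr.out hd with h | h
          exacts [hr1 h, hr2 h]
        have : Nat.card P = r ^ (Nat.card G).factorization r := P.card_eq_multiplicity
        rw [Nat.factorization_eq_zero_of_not_dvd hnd, pow_zero] at this
        have : (P : Subgroup G) = ⊥ := Subgroup.eq_bot_of_card_eq _ this
        rw [this]; infer_instance
    exact ((isNilpotent_of_finite_tfae (G := G)).out 3 0).mp h4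
  have hpp : p = p' := hpm.resolve_right hnp
  refine ⟨hpp, ?_⟩
  rcases hqm with h1 | h1
  · exact absurd (hpp.trans h1.symm) hpq
  · exact h1

end Unique

section SDP

variable {N G : Type*} [Group N] [Group G] {φ : G →* MulAut N}

instance sdpFinite [Finite N] [Finite G] : Finite (N ⋊[φ] G) :=
  Finite.of_injective (fun x => (x.left, x.right))
    (fun _ _ h => SemidirectProduct.ext (congrArg Prod.fst h) (congrArg Prod.snd h))

lemma conj_inl_sdp (hcomm : ∀ a b : N, a * b = b * a) (g : N ⋊[φ] G) (x : N) :
    g * SemidirectProduct.inl x * g⁻¹ = SemidirectProduct.inl (φ g.right x) := by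
  obtain ⟨l, r⟩ := g
  show (⟨l, r⟩ : N ⋊[φ] G) * SemidirectProduct.inl x * (⟨l, r⟩ : N ⋊[φ] G)⁻¹
      = SemidirectProduct.inl (φ r x)
  have h0 : (⟨l, r⟩ : N ⋊[φ] G) = SemidirectProduct.inl l * SemidirectProduct.inr r :=
    SemidirectProduct.mk_eq_inl_mul_inr r l
  rw [h0]
  have h1 : SemidirectProduct.inr r * SemidirectProduct.inl x * SemidirectProduct.inr r⁻¹
      = SemidirectProduct.inl (φ r x) := (SemidirectProduct.inl_aut r x).symm
  calc SemidirectProduct.inl l * SemidirectProduct.inr r * SemidirectProduct.inl x *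
        (SemidirectProduct.inl l * SemidirectProduct.inr r)⁻¹
      = SemidirectProduct.inl l * (SemidirectProduct.inr r * SemidirectProduct.inl x *
        (SemidirectProduct.inr r)⁻¹) * (SemidirectProduct.inl l)⁻¹ := by group
    _ = SemidirectProduct.inl l * SemidirectProduct.inl (φ r x) *
        (SemidirectProduct.inl l)⁻¹ := by rw [← map_inv, h1]
    _ = SemidirectProduct.inl (l * φ r x) * SemidirectProduct.inl l⁻¹ := by
        rw [← map_mul, ← map_inv]
    _ = SemidirectProduct.inl (l * φ r x * l⁻¹) := by rw [← map_mul]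
    _ = SemidirectProduct.inl (φ r x) := by
        rw [hcomm l (φ r x), mul_assoc, mul_inv_cancel, mul_one]

lemma card_sdp : Nat.card (N ⋊[φ] G) = Nat.card N * Nat.card G := by
  rw [← Nat.card_prod]
  exact Nat.card_congr ⟨fun x => (x.left, x.right), fun p => ⟨p.1, p.2⟩,
    fun x => rfl, fun p => rfl⟩

end SDP

section Construction

variable {F : Type} [Field F] [Fintype F]

/-- Additive automorphisms as multiplicative automorphisms of `Multiplicative`. -/
def addAutToMulAut (A : Type*) [AddGroup A] : Multiplicative (AddAut A) →* MulAut (Multiplicative A) where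
  toFun e := AddEquiv.toMultiplicative (Multiplicative.toAdd e)
  map_one' := rfl
  map_mul' _ _ := rfl

/-- The action of the cyclic group generated by a unit `ζ` on `Multiplicative F`. -/
def sphi (ζ : Fˣ) : ↥(Subgroup.zpowers ζ) →* MulAut (Multiplicative F) :=
  (addAutToMulAut F).comp ((DistribMulAction.toAddAut Fˣ F).comp (Subgroup.zpowers ζ).subtype)

omit [Fintype F] in
lemma sphi_apply (ζ : Fˣ) (s : ↥(Subgroup.zpowers ζ)) (a : Multiplicative F) :
    sphi ζ s a = Multiplicative.ofAdd ((((s : Fˣ) : F)) * Multiplicative.toAdd a) := rfl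

theorem schmidt_master (p q : ℕ) (hp : p.Prime) (hq : q.Prime) (hpq : p ≠ q) [CharP F p]
    (ζ : Fˣ) (hζ : orderOf ζ = q) (hT : Subring.closure {((ζ : Fˣ) : F)} = ⊤) :
    IsSchmidtPQGroup p q (Multiplicative F ⋊[sphi ζ] ↥(Subgroup.zpowers ζ)) := by
  haveI : Fact p.Prime := ⟨hp⟩
  haveI : Fact q.Prime := ⟨hq⟩
  obtain ⟨m, -, hFcard⟩ := FiniteField.card F p
  set n := (m : ℕ) with hn
  have npos : 0 < n := m.pos
  set QQ := ↥(Subgroup.zpowers ζ) with hQQ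
  set GG := Multiplicative F ⋊[sphi ζ] QQ with hGG
  have hζ1 : ζ ≠ 1 := by
    intro h
    rw [h, orderOf_one] at hζ
    exact hq.one_lt.ne' hζ.symm
  have hcardN : Nat.card (Multiplicative F) = p ^ n := by
    rw [Nat.card_eq_fintype_card, Fintype.card_multiplicative, hFcard]
  have hcardQ : Nat.card QQ = q := by rw [hQQ, Nat.card_zpowers, hζ]
  have hcardG : Nat.card GG = p ^ n * q := by rw [hGG, card_sdp, hcardN, hcardQ]
  have hpn0 : (p : ℕ) ^ n ≠ 0 := pow_ne_zero _ hp.pos.ne'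
  have hfacp : (Nat.card GG).factorization p = n := by
    rw [hcardG, Nat.factorization_mul hpn0 hq.pos.ne', Finsupp.add_apply,
      hp.factorization_pow, hq.factorization, Finsupp.single_eq_same,
      Finsupp.single_eq_of_ne' hpq.symm, add_zero]
  have hfacq : (Nat.card GG).factorization q = 1 := by
    rw [hcardG, Nat.factorization_mul hpn0 hq.pos.ne', Finsupp.add_apply,
      hp.factorization_pow, hq.factorization, Finsupp.single_eq_same,
      Finsupp.single_eq_of_ne' hpq, zero_add]
  have hcardker : Nat.card (SemidirectProduct.rightHom :
      GG →* QQ).ker = p ^ n := by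
    rw [← SemidirectProduct.range_inl_eq_ker_rightHom, MonoidHom.range_eq_map]
    rw [← hcardN]
    exact Nat.card_congr ((Subgroup.equivMapOfInjective ⊤ _
      SemidirectProduct.inl_injective).symm.toEquiv.trans Subgroup.topEquiv.toEquiv)
  -- non-nilpotency
  have hnonnil : ¬ Group.IsNilpotent GG := by
    intro hnil
    have hsyl : ∀ (r : ℕ) (_ : Fact r.Prime) (P : Sylow r GG), (P : Subgroup GG).Normal :=
      ((isNilpotent_of_finite_tfae (G := GG)).out 0 3).mp hnil
    set s : QQ := ⟨ζ, Subgroup.mem_zpowers ζ⟩ with hs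
    set y : GG := SemidirectProduct.inr s with hy
    have hos : orderOf s = q := by
      rw [← hζ]
      exact (orderOf_injective (Subgroup.zpowers ζ).subtype Subtype.coe_injective s).symm
    have hoy : orderOf y = q := by
      rw [hy, ← hos]
      exact orderOf_injective _ SemidirectProduct.inr_injective s
    have hcardy : Nat.card (Subgroup.zpowers y) = q ^ (Nat.card GG).factorization q := by
      rw [Nat.card_zpowers, hoy, hfacq, pow_one]
    have hnorm := hsyl q ⟨hq⟩ (Sylow.ofCard _ hcardy)
    rw [Sylow.coe_ofCard] at hnorm
    set a : Multiplicative F := Multiplicative.ofAdd (1 : F) with ha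
    have hmem : SemidirectProduct.inl a * y * (SemidirectProduct.inl a)⁻¹ ∈
        Subgroup.zpowers y := hnorm.conj_mem y (Subgroup.mem_zpowers y) _
    have hc : y⁻¹ * (SemidirectProduct.inl a * y * (SemidirectProduct.inl a)⁻¹) ∈
        Subgroup.zpowers y :=
      Subgroup.mul_mem _ (Subgroup.inv_mem _ (Subgroup.mem_zpowers y)) hmem
    have hform : y⁻¹ * (SemidirectProduct.inl a * y * (SemidirectProduct.inl a)⁻¹)
        = SemidirectProduct.inl (sphi ζ s⁻¹ a * a⁻¹) := by
      have h1 : (SemidirectProduct.inr s)⁻¹ * SemidirectProduct.inl a * SemidirectProduct.inr s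
          = (SemidirectProduct.inl (sphi ζ s⁻¹ a) : GG) := by
        rw [map_inv (sphi ζ) s, ← map_inv SemidirectProduct.inr s]
        exact (SemidirectProduct.inl_aut_inv s a).symm
      calc y⁻¹ * (SemidirectProduct.inl a * y * (SemidirectProduct.inl a)⁻¹)
          = (SemidirectProduct.inr s)⁻¹ * SemidirectProduct.inl a * SemidirectProduct.inr s *
            (SemidirectProduct.inl a)⁻¹ := by rw [hy]; group; simp only [zpow_neg, zpow_one]
        _ = SemidirectProduct.inl (sphi ζ s⁻¹ a) * (SemidirectProduct.inl a)⁻¹ := by rw [h1]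
        _ = SemidirectProduct.inl (sphi ζ s⁻¹ a * a⁻¹) := by rw [← map_inv, ← map_mul]
    rw [hform] at hc
    rw [Subgroup.mem_zpowers_iff] at hc
    obtain ⟨k, hk⟩ := hc
    have hleft : (y ^ k).left = 1 := by
      rw [hy, ← map_zpow]
      exact SemidirectProduct.left_inr _
    rw [hk] at hleft
    rw [SemidirectProduct.left_inl] at hleft
    have heq2 : sphi ζ s⁻¹ a = a := by
      have := mul_inv_eq_one.mp hleft
      exact this
    rw [sphi_apply] at heq2
    have hζF : ((ζ : Fˣ) : F)⁻¹ = 1 := by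
      have h5 := congrArg Multiplicative.toAdd heq2
      simpa [ha, hs] using h5
    exact hζ1 (Units.ext (by rw [← inv_inv ((ζ : Fˣ) : F), hζF, inv_one, Units.val_one]))
  -- proper subgroups are nilpotent
  have hproper : ∀ H : Subgroup GG, H ≠ ⊤ → Group.IsNilpotent H := by
    intro H hH
    by_cases hcase : ∀ h ∈ H, SemidirectProduct.rightHom h = (1 : QQ)
    · apply nilpotent_of_comm_forall
      intro a b
      have hmema : (a : GG) ∈ (SemidirectProduct.inl :
          Multiplicative F →* GG).range := by
        rw [SemidirectProduct.range_inl_eq_ker_rightHom]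
        exact hcase a a.2
      have hmemb : (b : GG) ∈ (SemidirectProduct.inl :
          Multiplicative F →* GG).range := by
        rw [SemidirectProduct.range_inl_eq_ker_rightHom]
        exact hcase b b.2
      obtain ⟨x, hx⟩ := hmema
      obtain ⟨z, hz⟩ := hmemb
      have : (a : GG) * b = (b : GG) * a := by
        rw [← hx, ← hz, ← map_mul, ← map_mul, mul_comm]
      exact Subtype.ext this
    · push_neg at hcase
      obtain ⟨h₀, hh₀, hs₀⟩ := hcase
      set s₀ : QQ := SemidirectProduct.rightHom h₀ with hs₀def
      have hos₀ : orderOf s₀ = q := by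
        have hdvd : orderOf s₀ ∣ q := by
          rw [← hcardQ]; exact orderOf_dvd_natCard s₀
        rcases (Nat.Prime.eq_one_or_self_of_dvd hq _ hdvd) with h | h
        · exact absurd (orderOf_eq_one_iff.mp h) hs₀
        · exact h
      have htop : Subgroup.zpowers s₀ = (⊤ : Subgroup QQ) := by
        apply Subgroup.eq_top_of_card_eq
        rw [Nat.card_zpowers, hos₀, hcardQ]
      set M := Subgroup.comap (SemidirectProduct.inl : Multiplicative F →* GG) H with hM
      have hconj : ∀ g ∈ H, ∀ x ∈ M, sphi ζ (SemidirectProduct.rightHom g) x ∈ M := by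
        intro g hg x hx
        have key : g * SemidirectProduct.inl x * g⁻¹
            = SemidirectProduct.inl (sphi ζ (SemidirectProduct.rightHom g) x) :=
          conj_inl_sdp (fun a b => mul_comm a b) g x
        show SemidirectProduct.inl _ ∈ H
        rw [← key]
        exact H.mul_mem (H.mul_mem hg hx) (H.inv_mem hg)
      have hζM : ∀ x ∈ M, sphi ζ ⟨ζ, Subgroup.mem_zpowers ζ⟩ x ∈ M := by
        intro x hx
        have hmem : (⟨ζ, Subgroup.mem_zpowers ζ⟩ : QQ) ∈ Subgroup.zpowers s₀ := by
          rw [htop]; trivial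
        rw [Subgroup.mem_zpowers_iff] at hmem
        obtain ⟨k, hk⟩ := hmem
        have h1 := hconj (h₀ ^ k) (H.zpow_mem hh₀ k) x hx
        rw [map_zpow] at h1
        rwa [hk] at h1
      by_cases hMbot : M = ⊥
      · apply nilpotent_of_comm_forall
        set f := SemidirectProduct.rightHom.comp H.subtype with hf
        have hinj : Function.Injective f := by
          intro a b hab
          have h1 : f (a * b⁻¹) = 1 := by
            rw [map_mul, map_inv, hab, mul_inv_cancel]
          have h2 : ((a * b⁻¹ : H) : GG) ∈ (SemidirectProduct.inl :
              Multiplicative F →* GG).range := by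
            rw [SemidirectProduct.range_inl_eq_ker_rightHom]
            exact h1
          obtain ⟨x, hx⟩ := h2
          have hxM : x ∈ M := by
            show SemidirectProduct.inl x ∈ H
            rw [hx]
            exact (a * b⁻¹).2
          rw [hMbot, Subgroup.mem_bot] at hxM
          have h3 : ((a * b⁻¹ : H) : GG) = 1 := by rw [← hx, hxM, map_one]
          have h4 : (a * b⁻¹ : H) = 1 := Subtype.ext h3
          rw [mul_inv_eq_one] at h4
          exact h4
        intro a b
        apply hinj
        rw [map_mul, map_mul, mul_comm]
      · exfalso
        obtain ⟨⟨x₀, hx₀M⟩, hx₀⟩ := Subgroup.ne_bot_iff_exists_ne_one.mp hMbot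
        have hx₀1 : x₀ ≠ 1 := fun h => hx₀ (Subtype.ext h)
        have ha₀ : Multiplicative.toAdd x₀ ≠ 0 := by
          intro h
          apply hx₀1
          have := congrArg Multiplicative.ofAdd h
          simpa using this
        have hmul : ∀ c : F, ∀ y : F, Multiplicative.ofAdd y ∈ M →
            Multiplicative.ofAdd (c * y) ∈ M := by
          intro c
          have hc : c ∈ Subring.closure {((ζ : Fˣ) : F)} := hT ▸ Subring.mem_top c
          refine Subring.closure_induction
            (p := fun x _ => ∀ y : F, Multiplicative.ofAdd y ∈ M →
              Multiplicative.ofAdd (x * y) ∈ M) ?_ ?_ ?_ ?_ ?_ ?_ hc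
          · intro x hx y hy
            rw [Set.mem_singleton_iff] at hx
            subst hx
            have := hζM _ hy
            rwa [sphi_apply, toAdd_ofAdd] at this
          · intro y _
            rw [zero_mul]
            simpa using M.one_mem
          · intro y hy
            rwa [one_mul]
          · intro c d _ _ hcc hdd y hy
            rw [add_mul, ofAdd_add]
            exact M.mul_mem (hcc y hy) (hdd y hy)
          · intro c _ hcc y hy
            rw [neg_mul, ofAdd_neg]
            exact M.inv_mem (hcc y hy)
          · intro c d _ _ hcc hdd y hy
            rw [mul_assoc]
            exact hcc _ (hdd y hy)
        have hMall : ∀ x : Multiplicative F, x ∈ M := by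
          intro x
          have h0 : Multiplicative.ofAdd (Multiplicative.toAdd x₀) ∈ M := by
            simpa using hx₀M
          have h1 := hmul (Multiplicative.toAdd x * (Multiplicative.toAdd x₀)⁻¹) _ h0
          rw [inv_mul_cancel_right₀ ha₀] at h1
          simpa using h1
        apply hH
        rw [Subgroup.eq_top_iff']
        intro g
        have hinrs₀ : SemidirectProduct.inr s₀ ∈ H := by
          have h1 : SemidirectProduct.inr (h₀.right) = (SemidirectProduct.inl h₀.left)⁻¹ * h₀ := by
            rw [eq_inv_mul_iff_mul_eq, SemidirectProduct.inl_left_mul_inr_right]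
          have h2 : SemidirectProduct.inr s₀ = (SemidirectProduct.inl h₀.left)⁻¹ * h₀ := h1
          rw [h2]
          exact H.mul_mem (H.inv_mem (hMall h₀.left)) hh₀
        obtain ⟨k, hk⟩ := Subgroup.mem_zpowers_iff.mp
          (htop ▸ Subgroup.mem_top g.right : g.right ∈ Subgroup.zpowers s₀)
        have hg : g = SemidirectProduct.inl g.left * SemidirectProduct.inr g.right :=
          (SemidirectProduct.inl_left_mul_inr_right g).symm
        rw [hg]
        refine H.mul_mem (hMall g.left) ?_
        rw [← hk, map_zpow SemidirectProduct.inr s₀ k]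
        exact H.zpow_mem hinrs₀ k
  refine ⟨⟨inferInstance, hnonnil, hproper⟩, ?_, ?_⟩
  · intro r hr hrd
    rw [hcardG] at hrd
    rcases (Nat.Prime.dvd_mul hr).mp hrd with h | h
    · exact Or.inl ((Nat.prime_dvd_prime_iff_eq hr hp).mp (hr.dvd_of_dvd_pow h))
    · exact Or.inr ((Nat.prime_dvd_prime_iff_eq hr hq).mp h)
  · intro P
    have hker : Nat.card (SemidirectProduct.rightHom : GG →* QQ).ker
        = p ^ ((Nat.card GG).factorization p) := by rw [hcardker, hfacp]
    set P₀ : Sylow p GG := Sylow.ofCard _ hker with hP₀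
    have hnorm : (P₀ : Subgroup GG).Normal := by
      rw [hP₀, Sylow.coe_ofCard]
      exact MonoidHom.normal_ker _
    haveI := Sylow.unique_of_normal P₀ hnorm
    have : P = P₀ := Subsingleton.elim P P₀
    rw [this]
    exact hnorm

end Construction

theorem exists_schmidt_group (p q : ℕ) (hp : p.Prime) (hq : q.Prime) (hpq : p ≠ q) :
    ∃ (S : Type) (_ : Group S) (_ : Finite S), IsSchmidtPQGroup p q S := by
  haveI : Fact p.Prime := ⟨hp⟩
  haveI : Fact q.Prime := ⟨hq⟩
  have hcop : Nat.Coprime p q := (Nat.coprime_primes hp hq).mpr hpq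
  set u : (ZMod q)ˣ := ZMod.unitOfCoprime p hcop with hu
  set n := orderOf u with hn
  have hn0 : n ≠ 0 := (orderOf_pos u).ne'
  -- the bridge between divisibility and powers of u
  have hbridge : ∀ m : ℕ, q ∣ p ^ m - 1 ↔ u ^ m = 1 := by
    intro m
    have h1 : 1 ≤ p ^ m := Nat.one_le_pow m p hp.pos
    rw [← ZMod.natCast_eq_zero_iff, Nat.cast_sub h1, Nat.cast_pow, Nat.cast_one,
      sub_eq_zero, Units.ext_iff, Units.val_pow_eq_pow_val, ZMod.coe_unitOfCoprime,
      Units.val_one, eq_comm]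
  set F := GaloisField p n with hF
  letI : Fintype F := Fintype.ofFinite F
  letI : DecidableEq F := Classical.decEq F
  have hFcard : Fintype.card F = p ^ n := by
    rw [← Nat.card_eq_fintype_card]; exact GaloisField.card p n hn0
  have hudvd : q ∣ Fintype.card Fˣ := by
    classical
    rw [Fintype.card_units, hFcard]
    exact (hbridge n).mpr (pow_orderOf_eq_one u)
  obtain ⟨ζ, hζ⟩ := exists_prime_orderOf_dvd_card q hudvd
  -- the subring generated by ζ is everything
  have hT : Subring.closure {((ζ : Fˣ) : F)} = ⊤ := by
    set T := Subring.closure {((ζ : Fˣ) : F)} with hTdef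
    letI : Fintype T := Fintype.ofFinite T
    letI : DecidableEq T := Classical.decEq T
    letI : Field T := Fintype.fieldOfDomain T
    have hζ1 : ζ ≠ 1 := by
      intro h
      rw [h, orderOf_one] at hζ
      exact hq.one_lt.ne' hζ.symm
    set t : T := ⟨((ζ : Fˣ) : F), Subring.subset_closure (Set.mem_singleton _)⟩ with ht
    have htq : t ^ q = 1 := by
      apply Subtype.ext
      show ((ζ : Fˣ) : F) ^ q = 1
      rw [← Units.val_pow_eq_pow_val, ← hζ, pow_orderOf_eq_one, Units.val_one]
    have ht1 : t ≠ 1 := by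
      intro h
      apply hζ1
      apply Units.ext
      exact congrArg Subtype.val h
    have hot : orderOf t = q := orderOf_eq_prime htq ht1
    have hq1 : q - 1 + 1 = q := Nat.succ_pred_eq_of_pos hq.pos
    have hval : t * t ^ (q - 1) = 1 := by
      rw [← pow_succ', hq1, htq]
    set ζT : Tˣ := ⟨t, t ^ (q - 1), hval, by rw [mul_comm]; exact hval⟩ with hζT
    have hoζT : orderOf ζT = q := by
      rw [← hot]
      exact (orderOf_units (y := ζT)).symm
    have hdvdT : q ∣ Fintype.card Tˣ := hoζT ▸ orderOf_dvd_card
    obtain ⟨m', -, hTcard⟩ := FiniteField.card T p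
    have hdvd2 : q ∣ p ^ (m' : ℕ) - 1 := by
      rwa [Fintype.card_units, hTcard] at hdvdT
    have hnm : n ∣ (m' : ℕ) := orderOf_dvd_of_pow_eq_one ((hbridge _).mp hdvd2)
    have hle : (m' : ℕ) ≤ n := by
      have hinj : Function.Injective (Subtype.val : T → F) := Subtype.coe_injective
      have := Fintype.card_le_of_injective _ hinj
      rw [hTcard, hFcard] at this
      exact (Nat.pow_le_pow_iff_right hp.one_lt).mp this
    have hmn : (m' : ℕ) = n := le_antisymm hle (Nat.le_of_dvd m'.pos hnm)
    have hcards : Fintype.card T = Fintype.card F := by rw [hTcard, hmn, hFcard]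
    have hsurj : Function.Surjective (Subtype.val : T → F) :=
      ((Fintype.bijective_iff_injective_and_card _).mpr
        ⟨Subtype.coe_injective, hcards⟩).2
    rw [Subring.eq_top_iff']
    intro x
    obtain ⟨y, hy⟩ := hsurj x
    rw [← hy]
    exact y.2
  exact ⟨Multiplicative F ⋊[sphi ζ] ↥(Subgroup.zpowers ζ), inferInstance, inferInstance,
    schmidt_master p q hp hq hpq ζ hζ hT⟩


section Blocks

lemma pair_eq_of_hasSchmidt {S : Type*} [Group S] {p q p' q' : ℕ}
    (hp : p.Prime) (hq : q.Prime) (hpq : p ≠ q)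
    (hp' : p'.Prime) (hq' : q'.Prime) (hpq' : p' ≠ q')
    (hS : IsSchmidtPQGroup p' q' S) (h : HasSchmidtPQSubgroup p q S) : p = p' ∧ q = q' := by
  obtain ⟨K, hK⟩ := h
  have hKtop : K = ⊤ := by
    by_contra hne
    exact hK.1.2.1 (hS.1.2.2 K hne)
  subst hKtop
  exact isSchmidtPQ_unique hp hq hpq hp' hq' hpq'
    (isSchmidtPQ_of_mulEquiv hp Subgroup.topEquiv hK) hS

lemma exists_comm_group (V : Finset ℕ) (hV : ∀ r ∈ V, r.Prime) :
    ∃ (C : Type) (_ : CommGroup C) (_ : Finite C),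
      ∀ r : ℕ, r.Prime → (r ∣ Nat.card C ↔ r ∈ V) := by
  classical
  induction V using Finset.induction with
  | empty =>
    refine ⟨PUnit, inferInstance, inferInstance, fun r hr => ?_⟩
    simp only [Nat.card_eq_fintype_card, Fintype.card_punit, Nat.dvd_one, Finset.notMem_empty,
      iff_false]
    exact hr.ne_one
  | @insert r₀ V' hnot ih =>
    have hr₀ : r₀.Prime := hV r₀ (Finset.mem_insert_self _ _)
    obtain ⟨C', iC', iF', hC'⟩ := ih (fun r hr => hV r (Finset.mem_insert_of_mem hr))

    haveI : NeZero r₀ := ⟨hr₀.pos.ne'⟩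
    refine ⟨Multiplicative (ZMod r₀) × C', inferInstance, inferInstance, fun r hr => ?_⟩
    have hcard : Nat.card (Multiplicative (ZMod r₀) × C') = r₀ * Nat.card C' := by
      rw [Nat.card_prod, Nat.card_eq_fintype_card, Fintype.card_multiplicative, ZMod.card]
    rw [hcard, hr.dvd_mul, Nat.prime_dvd_prime_iff_eq hr hr₀, hC' r hr, Finset.mem_insert]

lemma exists_schmidt_blocks (E : Finset (ℕ × ℕ))
    (hE : ∀ e ∈ E, e.1.Prime ∧ e.2.Prime ∧ e.1 ≠ e.2) :
    ∃ (B : Type) (_ : Group B) (_ : Finite B),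
      (∀ r : ℕ, r.Prime → (r ∣ Nat.card B ↔ ∃ e ∈ E, r = e.1 ∨ r = e.2)) ∧
      (∀ p q : ℕ, p.Prime → q.Prime → p ≠ q →
        (HasSchmidtPQSubgroup p q B ↔ (p, q) ∈ E)) := by
  classical
  induction E using Finset.induction with
  | empty =>
    refine ⟨PUnit, inferInstance, inferInstance, fun r hr => ?_, fun p q hp hq hpq => ?_⟩
    · simp only [Nat.card_eq_fintype_card, Fintype.card_punit, Nat.dvd_one,
        Finset.notMem_empty, false_and, exists_false, iff_false]
      exact hr.ne_one
    · simp only [Finset.notMem_empty, iff_false]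
      exact not_hasSchmidtPQ_of_nilpotent inferInstance
  | @insert e E' hnot ih =>
    have he := hE e (Finset.mem_insert_self _ _)
    obtain ⟨hp₀, hq₀, hne₀⟩ := he
    obtain ⟨B', iB', iFB', hB'div, hB'sch⟩ := ih (fun e' he' => hE e' (Finset.mem_insert_of_mem he'))

    obtain ⟨S, iS, iFS, hS⟩ := exists_schmidt_group e.1 e.2 hp₀ hq₀ hne₀

    have hSdvd : ∀ r : ℕ, r.Prime → (r ∣ Nat.card S ↔ r = e.1 ∨ r = e.2) := by
      intro r hr
      constructor
      · exact hS.2.1 r hr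
      · obtain ⟨h1, h2⟩ := isSchmidtPQ_dvd hp₀ hq₀ hne₀ hS
        rintro (rfl | rfl)
        exacts [h1, h2]
    refine ⟨S × B', inferInstance, inferInstance, fun r hr => ?_, fun p q hp hq hpq => ?_⟩
    · rw [Nat.card_prod, hr.dvd_mul, hSdvd r hr, hB'div r hr]
      constructor
      · rintro (h | ⟨e', he', h⟩)
        · exact ⟨e, Finset.mem_insert_self _ _, h⟩
        · exact ⟨e', Finset.mem_insert_of_mem he', h⟩
      · rintro ⟨e', he', h⟩
        rcases Finset.mem_insert.mp he' with rfl | he''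
        · exact Or.inl h
        · exact Or.inr ⟨e', he'', h⟩
    · constructor
      · intro h
        rcases hasSchmidtPQ_prod hp h with h | h
        · obtain ⟨h1, h2⟩ := pair_eq_of_hasSchmidt hp hq hpq hp₀ hq₀ hne₀ hS h
          rw [Finset.mem_insert]
          left
          rw [Prod.ext_iff]
          exact ⟨h1, h2⟩
        · exact Finset.mem_insert_of_mem ((hB'sch p q hp hq hpq).mp h)
      · intro h
        rcases Finset.mem_insert.mp h with h | h
        · have : HasSchmidtPQSubgroup p q S := by
            have : (p, q).1 = e.1 ∧ (p, q).2 = e.2 := by rw [h]; exact ⟨rfl, rfl⟩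
            obtain ⟨h1, h2⟩ := this
            simp only at h1 h2
            subst h1; subst h2
            exact hasSchmidtPQ_self hp hS
          exact hasSchmidtPQ_of_injective hp (MonoidHom.inl S B')
            (fun a b hab => congrArg Prod.fst hab) this
        · exact hasSchmidtPQ_of_injective hp (MonoidHom.inr S B')
            (fun a b hab => congrArg Prod.snd hab) ((hB'sch p q hp hq hpq).mpr h)

end Blocks


theorem statement_12 (G₁ : Type) [Group G₁] [Finite G₁]
    (E : Finset (ℕ × ℕ)) (hE : ∀ e ∈ E, e.1.Prime ∧ e.2.Prime ∧ e.1 ≠ e.2)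
    (hGE : ∀ p q : ℕ, p.Prime → q.Prime → p ≠ q → HasSchmidtPQSubgroup p q G₁ → (p, q) ∈ E)
    (V : Finset ℕ) (hV : ∀ r ∈ V, r.Prime)
    (hGV : ∀ r : ℕ, r.Prime → r ∣ Nat.card G₁ → r ∈ V)
    (hEV : ∀ e ∈ E, e.1 ∈ V ∧ e.2 ∈ V) :
    ∃ (G₂ : Type) (_ : Group G₂) (_ : Finite G₂),
      (∃ H : Subgroup G₂, Nonempty (G₁ ≃* H)) ∧
      (∀ r : ℕ, r.Prime → (r ∣ Nat.card G₂ ↔ r ∈ V)) ∧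
      (∀ p q : ℕ, p.Prime → q.Prime → p ≠ q →
        (HasSchmidtPQSubgroup p q G₂ ↔ (p, q) ∈ E)) := by
  obtain ⟨C, iC, iFC, hCdiv⟩ := exists_comm_group V hV

  obtain ⟨B, iB, iFB, hBdiv, hBsch⟩ := exists_schmidt_blocks E hE

  refine ⟨G₁ × C × B, inferInstance, inferInstance, ?_, ?_, ?_⟩
  · have hinj : Function.Injective (MonoidHom.inl G₁ (C × B)) :=
      fun a b hab => congrArg Prod.fst hab
    exact ⟨(MonoidHom.inl G₁ (C × B)).range, ⟨MonoidHom.ofInjective hinj⟩⟩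
  · intro r hr
    rw [Nat.card_prod, Nat.card_prod, hr.dvd_mul, hr.dvd_mul]
    constructor
    · rintro (h | h | h)
      · exact hGV r hr h
      · exact (hCdiv r hr).mp h
      · obtain ⟨e, he, h'⟩ := (hBdiv r hr).mp h
        rcases h' with rfl | rfl
        exacts [(hEV e he).1, (hEV e he).2]
    · intro h
      exact Or.inr (Or.inl ((hCdiv r hr).mpr h))
  · intro p q hp hq hpq
    constructor
    · intro h
      rcases hasSchmidtPQ_prod hp h with h | h
      · exact hGE p q hp hq hpq h
      rcases hasSchmidtPQ_prod hp h with h | h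
      · exact absurd h (not_hasSchmidtPQ_of_nilpotent inferInstance)
      · exact (hBsch p q hp hq hpq).mp h
    · intro h
      have hB : HasSchmidtPQSubgroup p q B := (hBsch p q hp hq hpq).mpr h
      have h1 : HasSchmidtPQSubgroup p q (C × B) :=
        hasSchmidtPQ_of_injective hp (MonoidHom.inr C B)
          (fun a b hab => congrArg Prod.snd hab) hB
      exact hasSchmidtPQ_of_injective hp (MonoidHom.inr G₁ (C × B))
        (fun a b hab => congrArg Prod.snd hab) h1
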